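/- Let T* ∈ (0,∞], let μ : [0,T*) → [0,∞) be locally Lebesgue integrable, let y₀ > 0, and let y : [0,T*) → [0,∞) be continuous and satisfy y(t) ≤ y₀ + ∫₀ᵗ μ(r)·y(r)⁷ dr for all t ∈ [0,T*). If sup_{t ∈ [0,T*)} y(t) = ∞, then ∫₀^{T*} μ(r) dr ≥ 1 / (6·y₀⁶). -/

import Mathlib

open MeasureTheory
open scoped ENNReal

private lemma aux_concave {v u : ℝ} (hv : 0 < v) (hvu : v ≤ u) :
    1 / (6 * v ^ 6) - 1 / (6 * u ^ 6) ≤ (u - v) / v ^ 7 := by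
  have hu : 0 < u := lt_of_lt_of_le hv hvu
  have key : 7 * u ^ 6 * v ≤ 6 * u ^ 7 + v ^ 7 := by
    have t1 : u ^ 5 * v ^ 1 ≤ u ^ 6 := by
      nlinarith [mul_le_mul_of_nonneg_left (pow_le_pow_left₀ hv.le hvu 1) (pow_nonneg hu.le 5)]
    have t2 : u ^ 4 * v ^ 2 ≤ u ^ 6 := by
      nlinarith [mul_le_mul_of_nonneg_left (pow_le_pow_left₀ hv.le hvu 2) (pow_nonneg hu.le 4)]
    have t3 : u ^ 3 * v ^ 3 ≤ u ^ 6 := by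
      nlinarith [mul_le_mul_of_nonneg_left (pow_le_pow_left₀ hv.le hvu 3) (pow_nonneg hu.le 3)]
    have t4 : u ^ 2 * v ^ 4 ≤ u ^ 6 := by
      nlinarith [mul_le_mul_of_nonneg_left (pow_le_pow_left₀ hv.le hvu 4) (pow_nonneg hu.le 2)]
    have t5 : u ^ 1 * v ^ 5 ≤ u ^ 6 := by
      nlinarith [mul_le_mul_of_nonneg_left (pow_le_pow_left₀ hv.le hvu 5) (pow_nonneg hu.le 1)]
    have t6 : v ^ 6 ≤ u ^ 6 := pow_le_pow_left₀ hv.le hvu 6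
    have hS : v * (u ^ 5 + u ^ 4 * v + u ^ 3 * v ^ 2 + u ^ 2 * v ^ 3 + u * v ^ 4 + v ^ 5)
        ≤ 6 * u ^ 6 := by nlinarith [t1, t2, t3, t4, t5, t6]
    nlinarith [mul_nonneg (sub_nonneg.2 hvu) (sub_nonneg.2 hS)]
  rw [div_sub_div _ _ (by positivity) (by positivity),
    div_le_div_iff₀ (by positivity) (by positivity)]
  nlinarith [mul_le_mul_of_nonneg_left key (pow_pos hv 6).le, pow_pos hv 6, pow_pos hu 6]

/-- Lower bound on the blow-up time: if y satisfies the seventh-power integral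
inequality on [0,T*) and is unbounded there, then ∫₀^{T*} μ(r) dr ≥ 1/(6·y₀⁶). -/
theorem stmt_15 (T : ℝ≥0∞) (hT : 0 < T)
    (μ : ℝ → ℝ)
    (hμ_nonneg : ∀ t, 0 ≤ t → ENNReal.ofReal t < T → 0 ≤ μ t)
    (hμ_loc : ∀ t, 0 ≤ t → ENNReal.ofReal t < T → IntegrableOn μ (Set.Icc 0 t))
    (y₀ : ℝ) (hy₀ : 0 < y₀)
    (y : ℝ → ℝ)
    (hy_cont : ContinuousOn y {t : ℝ | 0 ≤ t ∧ ENNReal.ofReal t < T})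
    (hy_nonneg : ∀ t, 0 ≤ t → ENNReal.ofReal t < T → 0 ≤ y t)
    (hy : ∀ t, 0 ≤ t → ENNReal.ofReal t < T →
      y t ≤ y₀ + ∫ r in Set.Ioc 0 t, μ r * y r ^ 7)
    (hblow : ∀ M : ℝ, ∃ t, 0 ≤ t ∧ ENNReal.ofReal t < T ∧ M < y t) :
    ENNReal.ofReal (1 / (6 * y₀ ^ 6)) ≤
      ∫⁻ r in {t : ℝ | 0 ≤ t ∧ ENNReal.ofReal t < T}, ENNReal.ofReal (μ r) := by
  by_contra hcon
  push_neg at hcon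
  set S : Set ℝ := {t : ℝ | 0 ≤ t ∧ ENNReal.ofReal t < T} with hS
  set I : ℝ≥0∞ := ∫⁻ r in S, ENNReal.ofReal (μ r) with hIdef
  have hIne : I ≠ ⊤ := (hcon.trans_le le_top).ne
  set c : ℝ := I.toReal with hcdef
  have hc_nonneg : 0 ≤ c := ENNReal.toReal_nonneg
  have hclt : c < 1 / (6 * y₀ ^ 6) := ENNReal.toReal_lt_of_lt_ofReal hcon
  set ε : ℝ := 1 / (6 * y₀ ^ 6) - c with hεdef
  have hεpos : 0 < ε := sub_pos.2 hclt
  set M : ℝ := (1 / (6 * ε)) ^ ((6 : ℝ)⁻¹) with hMdef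
  have hMpos : 0 < M := Real.rpow_pos_of_pos (by positivity) _
  have hM6 : M ^ (6 : ℕ) = 1 / (6 * ε) := by
    rw [hMdef, ← Real.rpow_natCast ((1 / (6 * ε)) ^ ((6 : ℝ)⁻¹)) 6,
      ← Real.rpow_mul (by positivity)]
    norm_num
  obtain ⟨t, ht0, htT, hyt⟩ := hblow M
  have hIcc : Set.Icc 0 t ⊆ S := fun s hs =>
    ⟨hs.1, lt_of_le_of_lt (ENNReal.ofReal_le_ofReal hs.2) htT⟩
  have hμ_int : IntegrableOn μ (Set.Icc 0 t) := hμ_loc t ht0 htT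
  have hμ_nn : ∀ s ∈ Set.Icc (0 : ℝ) t, 0 ≤ μ s := fun s hs =>
    hμ_nonneg s (hIcc hs).1 (hIcc hs).2
  have hy_nnIcc : ∀ s ∈ Set.Icc (0 : ℝ) t, 0 ≤ y s := fun s hs =>
    hy_nonneg s (hIcc hs).1 (hIcc hs).2
  have hy_contIcc : ContinuousOn y (Set.Icc 0 t) := hy_cont.mono hIcc
  set f : ℝ → ℝ := fun r => μ r * y r ^ 7 with hfdef
  have hf_int : IntegrableOn f (Set.Icc 0 t) := by
    obtain ⟨C, hC⟩ := isCompact_Icc.exists_bound_of_continuousOn (hy_contIcc.pow 7)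
    have hmeas : AEStronglyMeasurable (fun r => y r ^ 7)
        (volume.restrict (Set.Icc 0 t)) :=
      (hy_contIcc.pow 7).aestronglyMeasurable measurableSet_Icc
    have hbd : ∀ᵐ x ∂(volume.restrict (Set.Icc 0 t)), ‖y x ^ 7‖ ≤ C :=
      (ae_restrict_mem measurableSet_Icc).mono fun x hx => hC x hx
    have h := hμ_int.bdd_mul hmeas hbd
    exact h.congr ((ae_restrict_mem measurableSet_Icc).mono fun x _ => mul_comm _ _)
  have hf_nn : ∀ s ∈ Set.Icc (0 : ℝ) t, 0 ≤ f s := fun s hs =>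
    mul_nonneg (hμ_nn s hs) (pow_nonneg (hy_nnIcc s hs) 7)
  set G : ℝ → ℝ := fun s => ∫ r in Set.Ioc 0 s, μ r with hGdef
  set Y : ℝ → ℝ := fun s => y₀ + ∫ r in Set.Ioc 0 s, f r with hYdef
  have hyY : ∀ s ∈ Set.Icc (0 : ℝ) t, y s ≤ Y s := fun s hs =>
    hy s (hIcc hs).1 (hIcc hs).2
  have hY_pos : ∀ s ∈ Set.Icc (0 : ℝ) t, y₀ ≤ Y s := by
    intro s hs
    have : (0 : ℝ) ≤ ∫ r in Set.Ioc 0 s, f r :=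
      setIntegral_nonneg measurableSet_Ioc fun r hr =>
        hf_nn r ⟨hr.1.le, hr.2.trans hs.2⟩
    simp only [hYdef]; linarith
  have hY0 : Y 0 = y₀ := by simp [hYdef]
  have hG0 : G 0 = 0 := by simp [hGdef]
  -- increments
  have hGsub : ∀ a b, a ∈ Set.Icc (0 : ℝ) t → b ∈ Set.Icc (0 : ℝ) t → a ≤ b →
      G b = G a + ∫ r in Set.Ioc a b, μ r := by
    intro a b ha hb hab
    have : Set.Ioc (0 : ℝ) b = Set.Ioc 0 a ∪ Set.Ioc a b := (Set.Ioc_union_Ioc_eq_Ioc ha.1 hab).symm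
    simp only [hGdef]
    rw [this, setIntegral_union (Set.Ioc_disjoint_Ioc_of_le le_rfl) measurableSet_Ioc
      (hμ_int.mono_set fun r hr => ⟨hr.1.le, hr.2.trans ha.2⟩)
      (hμ_int.mono_set fun r hr => ⟨ha.1.trans hr.1.le, hr.2.trans hb.2⟩)]
  have hYsub : ∀ a b, a ∈ Set.Icc (0 : ℝ) t → b ∈ Set.Icc (0 : ℝ) t → a ≤ b →
      Y b = Y a + ∫ r in Set.Ioc a b, f r := by
    intro a b ha hb hab
    have : Set.Ioc (0 : ℝ) b = Set.Ioc 0 a ∪ Set.Ioc a b := (Set.Ioc_union_Ioc_eq_Ioc ha.1 hab).symm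
    simp only [hYdef]
    rw [this, setIntegral_union (Set.Ioc_disjoint_Ioc_of_le le_rfl) measurableSet_Ioc
      (hf_int.mono_set fun r hr => ⟨hr.1.le, hr.2.trans ha.2⟩)
      (hf_int.mono_set fun r hr => ⟨ha.1.trans hr.1.le, hr.2.trans hb.2⟩)]
    ring
  have hGd_nn : ∀ a b, a ∈ Set.Icc (0 : ℝ) t → b ∈ Set.Icc (0 : ℝ) t → a ≤ b →
      (0 : ℝ) ≤ ∫ r in Set.Ioc a b, μ r := by
    intro a b ha hb _
    exact setIntegral_nonneg measurableSet_Ioc fun r hr =>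
      hμ_nn r ⟨ha.1.trans hr.1.le, hr.2.trans hb.2⟩
  have hY_mono : ∀ a b, a ∈ Set.Icc (0 : ℝ) t → b ∈ Set.Icc (0 : ℝ) t → a ≤ b → Y a ≤ Y b := by
    intro a b ha hb hab
    rw [hYsub a b ha hb hab]
    have : (0 : ℝ) ≤ ∫ r in Set.Ioc a b, f r :=
      setIntegral_nonneg measurableSet_Ioc fun r hr =>
        hf_nn r ⟨ha.1.trans hr.1.le, hr.2.trans hb.2⟩
    linarith
  have hY_cont : ContinuousOn Y (Set.Icc 0 t) :=
    continuousOn_const.add (intervalIntegral.continuousOn_primitive hf_int)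
  have hG_cont : ContinuousOn G (Set.Icc 0 t) :=
    intervalIntegral.continuousOn_primitive hμ_int
  -- key increment bound
  have hinc : ∀ a b, a ∈ Set.Icc (0 : ℝ) t → b ∈ Set.Icc (0 : ℝ) t → a ≤ b →
      Y b - Y a ≤ Y b ^ 7 * ∫ r in Set.Ioc a b, μ r := by
    intro a b ha hb hab
    have hsub : Set.Ioc a b ⊆ Set.Icc (0 : ℝ) t := fun r hr =>
      ⟨ha.1.trans hr.1.le, hr.2.trans hb.2⟩
    have hmono : ∫ r in Set.Ioc a b, f r ≤ ∫ r in Set.Ioc a b, Y b ^ 7 * μ r := by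
      refine setIntegral_mono_on (hf_int.mono_set hsub)
        ((hμ_int.mono_set hsub).const_mul _) measurableSet_Ioc ?_
      intro r hr
      have hr' : r ∈ Set.Icc (0 : ℝ) t := hsub hr
      have h1 : y r ≤ Y b := (hyY r hr').trans (hY_mono r b hr' hb hr.2)
      have h2 : y r ^ 7 ≤ Y b ^ 7 := pow_le_pow_left₀ (hy_nnIcc r hr') h1 7
      calc μ r * y r ^ 7 ≤ μ r * Y b ^ 7 :=
            mul_le_mul_of_nonneg_left h2 (hμ_nn r hr')
        _ = Y b ^ 7 * μ r := mul_comm _ _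
    have heq := hYsub a b ha hb hab
    rw [MeasureTheory.integral_const_mul] at hmono
    linarith [hmono, heq]
  -- continuous induction: for every K > 1
  have main : ∀ K : ℝ, 1 < K → ∀ s ∈ Set.Icc (0 : ℝ) t,
      1 / (6 * y₀ ^ 6) - 1 / (6 * Y s ^ 6) ≤ K * G s := by
    intro K hK
    set A : Set ℝ := {s | 1 / (6 * y₀ ^ 6) - 1 / (6 * Y s ^ 6) ≤ K * G s} with hAdef
    have hsubA : Set.Icc (0 : ℝ) t ⊆ A := by
      have hcont : ContinuousOn
          (fun s => 1 / (6 * y₀ ^ 6) - 1 / (6 * Y s ^ 6) - K * G s) (Set.Icc 0 t) := by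
        refine ContinuousOn.sub (ContinuousOn.sub continuousOn_const ?_)
          (continuousOn_const.mul hG_cont)
        refine ContinuousOn.div continuousOn_const
          (continuousOn_const.mul (hY_cont.pow 6)) ?_
        intro s hs
        have : 0 < Y s := lt_of_lt_of_le hy₀ (hY_pos s hs)
        positivity
      have hclosed : IsClosed (A ∩ Set.Icc 0 t) := by
        have h := hcont.preimage_isClosed_of_isClosed (t := Set.Iic (0 : ℝ)) isClosed_Icc isClosed_Iic
        have heq : A ∩ Set.Icc 0 t =
            Set.Icc 0 t ∩ (fun s => 1 / (6 * y₀ ^ 6) - 1 / (6 * Y s ^ 6) - K * G s) ⁻¹'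
              Set.Iic 0 := by
          ext s
          simp only [hAdef, Set.mem_inter_iff, Set.mem_setOf_eq, Set.mem_preimage,
            Set.mem_Iic, sub_nonpos, and_comm]
        rw [heq]; exact h
      have h0A : (0 : ℝ) ∈ A := by
        simp only [hAdef, Set.mem_setOf_eq, hY0, hG0, mul_zero, sub_self, le_refl]
      refine hclosed.Icc_subset_of_forall_exists_gt h0A ?_
      intro x hx z hz
      have hxA := hx.1
      have hx0 := hx.2.1
      have hxt := hx.2.2
      have hxIcc : x ∈ Set.Icc (0 : ℝ) t := ⟨hx0, hxt.le⟩
      have hYx_pos : 0 < Y x := lt_of_lt_of_le hy₀ (hY_pos x hxIcc)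
      have h7 : Y x ^ 7 < K * Y x ^ 7 := by nlinarith [pow_pos hYx_pos 7]
      have hcont7 : ContinuousWithinAt (fun s => Y s ^ 7) (Set.Icc 0 t) x :=
        (hY_cont.pow 7) x hxIcc
      have hmem : (fun s => Y s ^ 7) ⁻¹' Set.Iio (K * Y x ^ 7) ∈
          nhdsWithin x (Set.Icc 0 t) := hcont7 (Iio_mem_nhds h7)
      obtain ⟨δ, hδpos, hδ⟩ := Metric.mem_nhdsWithin_iff.1 hmem
      set b : ℝ := min (min z t) (x + δ / 2) with hbdef
      have hxb : x < b := lt_min (lt_min hz hxt) (by linarith)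
      have hbz : b ≤ z := le_trans (min_le_left _ _) (min_le_left _ _)
      have hbt : b ≤ t := le_trans (min_le_left _ _) (min_le_right _ _)
      have hbIcc : b ∈ Set.Icc (0 : ℝ) t := ⟨hx0.trans hxb.le, hbt⟩
      have hbball : b ∈ Metric.ball x δ := by
        rw [Metric.mem_ball, Real.dist_eq, abs_of_pos (by linarith)]
        have : b ≤ x + δ / 2 := min_le_right _ _
        linarith
      have hYb7 : Y b ^ 7 < K * Y x ^ 7 := hδ ⟨hbball, hbIcc⟩
      refine ⟨b, ?_, hxb, hbz⟩
      -- b ∈ A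
      have hYxb : Y x ≤ Y b := hY_mono x b hxIcc hbIcc hxb.le
      have hconc : 1 / (6 * Y x ^ 6) - 1 / (6 * Y b ^ 6) ≤ (Y b - Y x) / Y x ^ 7 :=
        aux_concave hYx_pos hYxb
      set D : ℝ := ∫ r in Set.Ioc x b, μ r with hDdef
      have hD_nn : 0 ≤ D := hGd_nn x b hxIcc hbIcc hxb.le
      have hincxb : Y b - Y x ≤ Y b ^ 7 * D := hinc x b hxIcc hbIcc hxb.le
      have hstep : (Y b - Y x) / Y x ^ 7 ≤ K * D := by
        rw [div_le_iff₀ (by positivity)]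
        calc Y b - Y x ≤ Y b ^ 7 * D := hincxb
          _ ≤ (K * Y x ^ 7) * D := mul_le_mul_of_nonneg_right hYb7.le hD_nn
          _ = K * D * Y x ^ 7 := by ring
      have hGb : G b = G x + D := hGsub x b hxIcc hbIcc hxb.le
      have hxA' : 1 / (6 * y₀ ^ 6) - 1 / (6 * Y x ^ 6) ≤ K * G x := hxA
      show 1 / (6 * y₀ ^ 6) - 1 / (6 * Y b ^ 6) ≤ K * G b
      rw [hGb]
      linarith
    exact fun s hs => hsubA hs
  -- pass to the limit K → 1
  have htIcc : t ∈ Set.Icc (0 : ℝ) t := ⟨ht0, le_rfl⟩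
  have hGt_nn : 0 ≤ G t := by
    have := hGd_nn 0 t ⟨le_rfl, ht0⟩ htIcc ht0
    simpa using this
  have hfinal : 1 / (6 * y₀ ^ 6) - 1 / (6 * Y t ^ 6) ≤ G t := by
    by_contra hcon2
    push_neg at hcon2
    rcases eq_or_lt_of_le hGt_nn with h0 | hpos
    · have h2 := main 2 one_lt_two t htIcc
      rw [← h0] at h2 hcon2
      simp only [mul_zero] at h2
      exact absurd h2 (not_le.2 hcon2)
    · have hK : 1 < (1 / (6 * y₀ ^ 6) - 1 / (6 * Y t ^ 6) + G t) / (2 * G t) := by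
        rw [lt_div_iff₀ (by linarith)]
        linarith
      have h2 := main _ hK t htIcc
      have h3 : (1 / (6 * y₀ ^ 6) - 1 / (6 * Y t ^ 6) + G t) / (2 * G t) * G t
          = (1 / (6 * y₀ ^ 6) - 1 / (6 * Y t ^ 6) + G t) / 2 := by
        field_simp
      rw [h3] at h2
      linarith
  -- G t ≤ c
  have hGt_le : G t ≤ c := by
    have hofReal : ENNReal.ofReal (G t) = ∫⁻ r in Set.Ioc 0 t, ENNReal.ofReal (μ r) :=
      ofReal_integral_eq_lintegral_ofReal (hμ_int.mono_set Set.Ioc_subset_Icc_self)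
        ((ae_restrict_mem measurableSet_Ioc).mono fun r hr => hμ_nn r ⟨hr.1.le, hr.2⟩)
    have hsub : Set.Ioc (0 : ℝ) t ⊆ S := fun r hr => hIcc ⟨hr.1.le, hr.2⟩
    have hle : ENNReal.ofReal (G t) ≤ I := by
      rw [hofReal]; exact lintegral_mono_set hsub
    calc G t = (ENNReal.ofReal (G t)).toReal := (ENNReal.toReal_ofReal hGt_nn).symm
      _ ≤ I.toReal := ENNReal.toReal_mono hIne hle
  -- conclude
  have hYt_pos : 0 < Y t := lt_of_lt_of_le hy₀ (hY_pos t htIcc)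
  have hε_le : ε ≤ 1 / (6 * Y t ^ 6) := by
    simp only [hεdef]
    linarith
  have hYt6 : Y t ^ 6 ≤ 1 / (6 * ε) := by
    rw [le_div_iff₀ (by positivity)]
    rw [le_div_iff₀ (by positivity)] at hε_le
    linarith
  have hYtM : Y t ≤ M := by
    refine le_of_pow_le_pow_left₀ (n := 6) (by norm_num) hMpos.le ?_
    rw [hM6]
    exact hYt6
  have : y t ≤ Y t := hyY t htIcc
  linarith
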